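/- Let (X, ρ₁) be a weighted space, let q : X → q(X) be a continuous surjection from (X, ρ₁) onto a weighted space (q(X), ρ₂), and let P⁽¹⁾ be a generalized Feller semigroup on 𝓑^{ρ₁}(X). Assume ρ₂(q(x)) ≤ ρ₁(x) for all x ∈ X. Let D be a dense subspace of 𝓑^{ρ₂}(q(X)) such that for every f ∈ D and every t ≥ 0 there exists g ∈ 𝓑^{ρ₂}(q(X)) with P⁽¹⁾_t(f ∘ q) = g ∘ q, and assume there is a constant C ≥ 1 such that for all t ≥ 0 and all f ∈ 𝓑^{ρ₂}(q(X)) with |f(y)| ≤ ρ₂(y) for all y ∈ q(X), one has |P⁽¹⁾_t(f ∘ q)(x)| ≤ C ρ₂(q(x)) for all x ∈ X (this renders the paper's condition P⁽¹⁾_t(ρ₂∘q) ≤ C ρ₂∘q). Then there exists a generalized Feller semigroup P⁽²⁾ on 𝓑^{ρ₂}(q(X)) such that P⁽¹⁾_t(f ∘ q) = (P⁽²⁾_t f) ∘ q for all f ∈ 𝓑^{ρ₂}(q(X)) and all t ≥ 0. -/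

import Mathlib

open scoped ENNReal NNReal
open Filter Set MeasureTheory TopologicalSpace

noncomputable section

/-- An admissible weight function on a topological space: strictly positive with compact
and separable sublevel sets. -/
structure AdmissibleWeight {X : Type*} [TopologicalSpace X] (ρ : X → ℝ) : Prop where
  pos : ∀ x, 0 < ρ x
  isCompact_sublevel : ∀ R : ℝ, 0 < R → IsCompact {x | ρ x ≤ R}
  isSeparable_sublevel : ∀ R : ℝ, 0 < R → TopologicalSpace.IsSeparable {x | ρ x ≤ R}

/-- The Banach space of bounded real-valued functions on `X`, with the sup norm. -/
abbrev BddFun (X : Type*) := lp (fun _ : X => ℝ) ∞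

/-- Bounded continuous functions, divided by the weight `ρ`.  Under the isometric
identification `f ↦ f / ρ` of `B^ρ(X)` with bounded functions, this is the image of
`C_b(X)`. -/
def preCalB {X : Type*} [TopologicalSpace X] (ρ : X → ℝ) : Submodule ℝ (BddFun X) where
  carrier := {g | ∃ f : X → ℝ, Continuous f ∧ (∃ C, ∀ x, |f x| ≤ C) ∧ ∀ x, g x = f x / ρ x}
  add_mem' := by
    rintro g₁ g₂ ⟨f₁, hc₁, ⟨C₁, hb₁⟩, h₁⟩ ⟨f₂, hc₂, ⟨C₂, hb₂⟩, h₂⟩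
    refine ⟨f₁ + f₂, hc₁.add hc₂, ⟨C₁ + C₂, fun x => ?_⟩, fun x => ?_⟩
    · calc |(f₁ + f₂) x| ≤ |f₁ x| + |f₂ x| := abs_add_le _ _
        _ ≤ C₁ + C₂ := add_le_add (hb₁ x) (hb₂ x)
    · have : (g₁ + g₂ : BddFun X) x = g₁ x + g₂ x := by
        rw [lp.coeFn_add]; rfl
      rw [this, h₁ x, h₂ x]
      simp [Pi.add_apply, add_div]
  zero_mem' := ⟨0, continuous_const, ⟨0, by simp⟩, fun x => by simp⟩
  smul_mem' := by
    rintro c g ⟨f, hc, ⟨C, hb⟩, h⟩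
    refine ⟨fun x => c * f x, continuous_const.mul hc, ⟨|c| * C, fun x => ?_⟩, fun x => ?_⟩
    · rw [abs_mul]
      exact mul_le_mul_of_nonneg_left (hb x) (abs_nonneg c)
    · have : (c • g : BddFun X) x = c * g x := by
        rw [lp.coeFn_smul]; rfl
      rw [this, h x, mul_div_assoc]

/-- `𝓑^ρ(X)`: the closure of (the image of) the bounded continuous functions in `B^ρ(X)`,
realized under the isometric identification `f ↦ f / ρ` as a closed subspace of the bounded
functions on `X`. -/
def calB {X : Type*} [TopologicalSpace X] (ρ : X → ℝ) : Submodule ℝ (BddFun X) :=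
  (preCalB ρ).topologicalClosure

variable {X : Type*} [TopologicalSpace X] {ρ : X → ℝ}

/-- The value at `x` of (the `f/ρ` representation of) an element of `𝓑^ρ(X)`;
this equals `ρ(x)⁻¹ f(x)`. -/
def scaledApp (f : calB ρ) (x : X) : ℝ := (f : BddFun X) x

/-- The true value `f(x)` of an element of `𝓑^ρ(X)`. -/
def valOf (f : calB ρ) (x : X) : ℝ := ρ x * scaledApp f x

/-- A function `F : X → ℝ` belongs to `𝓑^ρ(X)`. -/
def MemCalB {X : Type*} [TopologicalSpace X] (ρ : X → ℝ) (F : X → ℝ) : Prop :=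
  ∃ g : BddFun X, g ∈ calB ρ ∧ ∀ x, g x = F x / ρ x

/-- A generalized Feller semigroup on `𝓑^ρ(X)`. -/
structure IsGenFellerSemigroup {X : Type*} [TopologicalSpace X] (ρ : X → ℝ)
    (P : ℝ≥0 → ((calB ρ) →L[ℝ] (calB ρ))) : Prop where
  map_zero : P 0 = ContinuousLinearMap.id ℝ (calB ρ)
  semigroup : ∀ s t : ℝ≥0, P (s + t) = (P s).comp (P t)
  tendsto_apply : ∀ (f : calB ρ) (x : X),
    Tendsto (fun t : ℝ≥0 => valOf (P t f) x) (nhds 0) (nhds (valOf f x))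
  norm_bound : ∃ (C : ℝ) (ε : ℝ≥0), 0 < ε ∧ ∀ t ≤ ε, ‖P t‖ ≤ C
  pos : ∀ (t : ℝ≥0) (f : calB ρ), (∀ x, 0 ≤ valOf f x) → ∀ x, 0 ≤ valOf (P t f) x



section MyAux
variable {Y : Type*} [TopologicalSpace Y] {ρ : Y → ℝ}

lemma myScaledApp_smul (c : ℝ) (f : calB ρ) (x : Y) :
    scaledApp (c • f) x = c * scaledApp f x := by
  simp only [scaledApp, Submodule.coe_smul]
  rw [lp.coeFn_smul]
  rfl

lemma myValOf_smul (c : ℝ) (f : calB ρ) (x : Y) : valOf (c • f) x = c * valOf f x := by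
  simp only [valOf, myScaledApp_smul]; ring

lemma myCalB_ext {f g : calB ρ} (h : ∀ x, scaledApp f x = scaledApp g x) : f = g :=
  Subtype.ext (lp.ext (funext h))

lemma myAbs_scaledApp_le (f : calB ρ) (x : Y) : |scaledApp f x| ≤ ‖f‖ := by
  have h := lp.norm_apply_le_norm (E := fun _ : Y => ℝ) ENNReal.top_ne_zero (f : BddFun Y) x
  rw [Real.norm_eq_abs] at h
  rw [Submodule.coe_norm]
  exact h

lemma myNorm_le (f : calB ρ) {c : ℝ} (hc : 0 ≤ c) (h : ∀ x, |scaledApp f x| ≤ c) :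
    ‖f‖ ≤ c := by
  have hb : ‖(f : BddFun Y)‖ ≤ c :=
    lp.norm_le_of_forall_le hc (fun x => by rw [Real.norm_eq_abs]; exact h x)
  rw [Submodule.coe_norm]
  exact hb

lemma myValOf_eq (hρ : AdmissibleWeight ρ) (f : calB ρ) (x : Y) :
    valOf f x = ρ x * scaledApp f x := rfl

lemma myScaledApp_of_valOf_le (hρ : AdmissibleWeight ρ) {c : ℝ} {f : calB ρ} {x : Y}
    (h : |valOf f x| ≤ c * ρ x) : |scaledApp f x| ≤ c := by
  have hpos := hρ.pos x
  have he : |valOf f x| = |scaledApp f x| * ρ x := by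
    rw [myValOf_eq hρ, abs_mul, abs_of_pos hpos, mul_comm]
  rw [he] at h
  exact le_of_mul_le_mul_right h hpos

lemma myValOf_ext (hρ : AdmissibleWeight ρ) {f g : calB ρ}
    (h : ∀ x, valOf f x = valOf g x) : f = g := by
  refine myCalB_ext fun x => ?_
  have := h x
  simp only [valOf] at this
  exact mul_left_cancel₀ (hρ.pos x).ne' this

lemma myAbs_valOf_le (hρ : AdmissibleWeight ρ) (f : calB ρ) (x : Y) :
    |valOf f x| ≤ ‖f‖ * ρ x := by
  have h1 : |valOf f x| = ρ x * |scaledApp f x| := by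
    rw [myValOf_eq hρ, abs_mul, abs_of_pos (hρ.pos x)]
  rw [h1, mul_comm (‖f‖)]
  exact mul_le_mul_of_nonneg_left (myAbs_scaledApp_le f x) (hρ.pos x).le

end MyAux

universe u

set_option maxHeartbeats 4000000 in
set_option synthInstance.maxHeartbeats 1000000 in
theorem my_main_aux
    {X : Type u} [TopologicalSpace X] [T2Space X] [CompletelyRegularSpace X]
    {X₂ : Type u} [TopologicalSpace X₂] [T2Space X₂] [CompletelyRegularSpace X₂]
    {ρ₁ : X → ℝ} (hρ₁ : AdmissibleWeight ρ₁)
    {ρ₂ : X₂ → ℝ} (hρ₂ : AdmissibleWeight ρ₂)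
    (q : X → X₂) (hqc : Continuous q) (hqs : Function.Surjective q)
    (hρq : ∀ x, ρ₂ (q x) ≤ ρ₁ x)
    (P1 : ℝ≥0 → (calB ρ₁) →L[ℝ] (calB ρ₁)) (hP1 : IsGenFellerSemigroup ρ₁ P1)
    (M : (calB ρ₂) →ₗ[ℝ] (calB ρ₁))
    (hM : ∀ (f : calB ρ₂) (x : X), valOf (M f) x = valOf f (q x))
    (D : Submodule ℝ (calB ρ₂)) (hD : Dense (D : Set (calB ρ₂)))
    (hinv : ∀ t : ℝ≥0, ∀ f ∈ D, ∃ g : calB ρ₂, P1 t (M f) = M g)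
    (C : ℝ) (hC : 1 ≤ C)
    (hgrow : ∀ (t : ℝ≥0) (f : calB ρ₂), (∀ y, |valOf f y| ≤ ρ₂ y) →
      ∀ x, |valOf (P1 t (M f)) x| ≤ C * ρ₂ (q x)) :
    ∃ P2 : ℝ≥0 → (calB ρ₂) →L[ℝ] (calB ρ₂),
      IsGenFellerSemigroup ρ₂ P2 ∧
      ∀ (t : ℝ≥0) (f : calB ρ₂), P1 t (M f) = M (P2 t f) := by
  classical
  -- completeness of the target space
  have hclosed : IsClosed ((calB ρ₂ : Submodule ℝ (BddFun X₂)) : Set (BddFun X₂)) :=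
    Submodule.isClosed_topologicalClosure _
  haveI : CompleteSpace (calB ρ₂) := hclosed.completeSpace_coe
  -- injectivity of M
  have Minj : Function.Injective M := by
    intro f g hfg
    refine myValOf_ext hρ₂ fun y => ?_
    obtain ⟨x, rfl⟩ := hqs y
    rw [← hM f x, ← hM g x, hfg]
  -- M is bounded
  have hMle : ∀ f : calB ρ₂, ‖M f‖ ≤ ‖f‖ := by
    intro f
    refine myNorm_le (M f) (norm_nonneg f) fun x => ?_
    have h1 : |valOf (M f) x| ≤ ‖f‖ * ρ₂ (q x) := by
      rw [hM f x]; exact myAbs_valOf_le hρ₂ f (q x)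
    refine myScaledApp_of_valOf_le hρ₁ ?_
    calc |valOf (M f) x| ≤ ‖f‖ * ρ₂ (q x) := h1
      _ ≤ ‖f‖ * ρ₁ x := mul_le_mul_of_nonneg_left (hρq x) (norm_nonneg f)
  -- the key bound
  have hC0 : (0:ℝ) ≤ C := zero_le_one.trans hC
  have hbound : ∀ (t : ℝ≥0) (f g : calB ρ₂), P1 t (M f) = M g → ‖g‖ ≤ C * ‖f‖ := by
    intro t f g hfg
    rcases eq_or_ne f 0 with rfl | hf0
    · have h0 : M g = 0 := by
        rw [← hfg, map_zero M, map_zero]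
      have hg0 : g = 0 := Minj (h0.trans (map_zero M).symm)
      have h1 : ‖g‖ = 0 := by rw [hg0]; exact norm_zero
      exact h1.le.trans (mul_nonneg hC0 (norm_nonneg _))
    · have hc : 0 < ‖f‖ := norm_pos_iff.mpr hf0
      have hsmall : ∀ y, |valOf (‖f‖⁻¹ • f) y| ≤ ρ₂ y := by
        intro y
        rw [myValOf_smul, abs_mul, abs_inv, abs_norm]
        rw [inv_mul_le_iff₀ hc]
        exact myAbs_valOf_le hρ₂ f y
      have hg := hgrow t (‖f‖⁻¹ • f) hsmall
      have heq : P1 t (M (‖f‖⁻¹ • f)) = M (‖f‖⁻¹ • g) := by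
        have h1 : M (‖f‖⁻¹ • f) = ‖f‖⁻¹ • M f := M.map_smul _ _
        have h2 : M (‖f‖⁻¹ • g) = ‖f‖⁻¹ • M g := M.map_smul _ _
        have h3 : P1 t (‖f‖⁻¹ • M f) = ‖f‖⁻¹ • P1 t (M f) := (P1 t).map_smul _ _
        rw [h1, h2, h3, hfg]
      refine myNorm_le g (mul_nonneg hC0 hc.le) fun y => ?_
      obtain ⟨x, rfl⟩ := hqs y
      have h3 := hg x
      rw [heq, hM, myValOf_smul, abs_mul, abs_inv, abs_norm] at h3
      have h4 : |valOf g (q x)| ≤ ‖f‖ * (C * ρ₂ (q x)) := by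
        rwa [inv_mul_le_iff₀ hc] at h3
      refine myScaledApp_of_valOf_le hρ₂ ?_
      calc |valOf g (q x)| ≤ ‖f‖ * (C * ρ₂ (q x)) := h4
        _ = C * ‖f‖ * ρ₂ (q x) := by ring
  -- the restriction of the induced operator to D, as a linear map
  let Tf : ℝ≥0 → ↥D → calB ρ₂ := fun t f => (hinv t f f.2).choose
  have hTspec : ∀ (t : ℝ≥0) (f : ↥D), P1 t (M (f : calB ρ₂)) = M (Tf t f) :=
    fun t f => (hinv t f f.2).choose_spec
  let T : ℝ≥0 → (↥D →ₗ[ℝ] calB ρ₂) := fun t =>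
    { toFun := Tf t
      map_add' := by
        intro f g
        refine Minj ?_
        have hc : ((f + g : ↥D) : calB ρ₂) = (f : calB ρ₂) + (g : calB ρ₂) := rfl
        rw [map_add M, ← hTspec t (f + g), ← hTspec t f, ← hTspec t g, hc, map_add M]
        exact map_add (P1 t) _ _
      map_smul' := by
        intro c f
        refine Minj ?_
        simp only [RingHom.id_apply]
        have hc : ((c • f : ↥D) : calB ρ₂) = c • (f : calB ρ₂) := rfl
        rw [map_smul M, ← hTspec t (c • f), ← hTspec t f, hc, map_smul M]
        exact map_smul (P1 t) _ _ }
  have hTbound : ∀ (t : ℝ≥0) (f : ↥D), ‖T t f‖ ≤ C * ‖f‖ := by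
    intro t f
    have h := hbound t (f : calB ρ₂) (T t f) (hTspec t f)
    rw [Submodule.coe_norm] at h
    exact h
  let TC : ℝ≥0 → (↥D →L[ℝ] calB ρ₂) := fun t =>
    (T t).mkContinuous C (hTbound t)
  -- extend by density
  have hDR : DenseRange (D.subtypeL) := by
    have : Set.range (D.subtypeL) = (D : Set (calB ρ₂)) := Subtype.range_coe
    rw [DenseRange, this]; exact hD
  have hUI : IsUniformInducing (D.subtypeL) :=
    isUniformEmbedding_subtype_val.toIsUniformInducing
  set P2 : ℝ≥0 → (calB ρ₂) →L[ℝ] (calB ρ₂) :=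
    fun t => (TC t).extend D.subtypeL with hP2def
  have hPext : ∀ (t : ℝ≥0) (f : ↥D), P2 t (f : calB ρ₂) = T t f := by
    intro t f
    exact ContinuousLinearMap.extend_eq (TC t) hDR hUI f
  -- M as a continuous linear map
  let Mc : (calB ρ₂) →L[ℝ] (calB ρ₁) := M.mkContinuous 1 (fun f => by
    simpa using hMle f)
  have hMc : ∀ f, Mc f = M f := fun f => rfl
  -- the key intertwining identity
  have hkey : ∀ (t : ℝ≥0) (f : calB ρ₂), P1 t (M f) = M (P2 t f) := by
    intro t
    have hfun : ((P1 t).comp Mc : calB ρ₂ → calB ρ₁) = (Mc.comp (P2 t) : calB ρ₂ → calB ρ₁) := by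
      refine Continuous.ext_on hD ((P1 t).comp Mc).continuous (Mc.comp (P2 t)).continuous ?_
      intro f hf
      have h1 : P2 t f = T t ⟨f, hf⟩ := hPext t ⟨f, hf⟩
      have h2 := hTspec t ⟨f, hf⟩
      simp only [ContinuousLinearMap.comp_apply, hMc, h1]
      exact h2
    intro f
    have := congrFun hfun f
    simpa only [ContinuousLinearMap.comp_apply, hMc] using this
  refine ⟨P2, ?_, fun t f => hkey t f⟩
  constructor
  · -- map_zero
    refine ContinuousLinearMap.ext fun f => ?_
    refine Minj ?_
    rw [← hkey, hP1.map_zero]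
    rfl
  · -- semigroup
    intro s t
    refine ContinuousLinearMap.ext fun f => ?_
    refine Minj ?_
    rw [← hkey, hP1.semigroup s t, ContinuousLinearMap.comp_apply, hkey t f, hkey s,
      ContinuousLinearMap.comp_apply]
  · -- tendsto
    intro f y
    obtain ⟨x, rfl⟩ := hqs y
    have h1 := hP1.tendsto_apply (M f) x
    have h2 : (fun t : ℝ≥0 => valOf (P1 t (M f)) x) = fun t : ℝ≥0 => valOf (P2 t f) (q x) := by
      funext t
      rw [hkey t f, hM]
    rw [h2, hM] at h1
    exact h1
  · -- norm bound
    refine ⟨C, 1, one_pos, fun t _ => ?_⟩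
    exact ContinuousLinearMap.opNorm_le_bound _ hC0 fun f => hbound t f (P2 t f) (hkey t f)
  · -- positivity
    intro t f hf y
    obtain ⟨x, rfl⟩ := hqs y
    have h1 : ∀ w, 0 ≤ valOf (M f) w := fun w => by rw [hM]; exact hf (q w)
    have h2 := hP1.pos t (M f) h1 x
    rwa [hkey t f, hM] at h2



/-- **Invariant subspaces of generalized Feller semigroups.**  If `P⁽¹⁾` on `𝓑^{ρ₁}(X)`
maps pullbacks along `q` of a dense set of functions in `𝓑^{ρ₂}(q(X))` to pullbacks, and
satisfies the growth estimate `P⁽¹⁾_t(ρ₂ ∘ q) ≤ C ρ₂ ∘ q`, then it induces a generalized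
Feller semigroup `P⁽²⁾` on `𝓑^{ρ₂}(q(X))` with `P⁽¹⁾_t (f ∘ q) = (P⁽²⁾_t f) ∘ q`.
Here `M` is the pullback operator `f ↦ f ∘ q`. -/
theorem invariant_subspace_genFeller
    {X : Type u} [TopologicalSpace X] [T2Space X] [CompletelyRegularSpace X]
    {X₂ : Type u} [TopologicalSpace X₂] [T2Space X₂] [CompletelyRegularSpace X₂]
    {ρ₁ : X → ℝ} (hρ₁ : AdmissibleWeight ρ₁)
    {ρ₂ : X₂ → ℝ} (hρ₂ : AdmissibleWeight ρ₂)
    (q : X → X₂) (hqc : Continuous q) (hqs : Function.Surjective q)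
    (hρq : ∀ x, ρ₂ (q x) ≤ ρ₁ x)
    (P1 : ℝ≥0 → (calB ρ₁) →L[ℝ] (calB ρ₁)) (hP1 : IsGenFellerSemigroup ρ₁ P1)
    (M : (calB ρ₂) →ₗ[ℝ] (calB ρ₁))
    (hM : ∀ (f : calB ρ₂) (x : X), valOf (M f) x = valOf f (q x))
    (D : Submodule ℝ (calB ρ₂)) (hD : Dense (D : Set (calB ρ₂)))
    (hinv : ∀ t : ℝ≥0, ∀ f ∈ D, ∃ g : calB ρ₂, P1 t (M f) = M g)
    (C : ℝ) (hC : 1 ≤ C)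
    (hgrow : ∀ (t : ℝ≥0) (f : calB ρ₂), (∀ y, |valOf f y| ≤ ρ₂ y) →
      ∀ x, |valOf (P1 t (M f)) x| ≤ C * ρ₂ (q x)) :
    ∃ P2 : ℝ≥0 → (calB ρ₂) →L[ℝ] (calB ρ₂),
      IsGenFellerSemigroup ρ₂ P2 ∧
      ∀ (t : ℝ≥0) (f : calB ρ₂), P1 t (M f) = M (P2 t f) :=
  my_main_aux hρ₁ hρ₂ q hqc hqs hρq P1 hP1 M hM D hD hinv C hC hgrow
end
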